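/- Let A and B be d×d real symmetric positive semidefinite matrices. Then ‖A^{1/2} − B^{1/2}‖_op ≤ ‖A − B‖_op^{1/2}. -/

import Mathlib

open Matrix
open scoped Classical

/-- The operator (spectral) norm of a real matrix, i.e. the operator norm of the induced
linear map between Euclidean spaces. -/
noncomputable def opNorm {m n : ℕ} (A : Matrix (Fin m) (Fin n) ℝ) : ℝ :=
  ‖LinearMap.toContinuousLinearMap (Matrix.toEuclideanLin A)‖

/-- The unique positive semidefinite square root of a positive semidefinite real matrix
(junk value `0` if the matrix is not positive semidefinite). -/
noncomputable def psdSqrt {d : ℕ} (A : Matrix (Fin d) (Fin d) ℝ) : Matrix (Fin d) (Fin d) ℝ :=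
  if h : A.PosSemidef then
    (h.1.eigenvectorUnitary.1 * diagonal ((↑) ∘ (√·) ∘ h.1.eigenvalues) *
      (star h.1.eigenvectorUnitary : Matrix (Fin d) (Fin d) ℝ))
  else 0

/-- The square root of a positive semidefinite real matrix (formerly in Mathlib). -/
noncomputable def Matrix.PosSemidef.sqrt {d : ℕ} {A : Matrix (Fin d) (Fin d) ℝ}
    (h : A.PosSemidef) : Matrix (Fin d) (Fin d) ℝ :=
  h.1.eigenvectorUnitary.1 * diagonal ((↑) ∘ (√·) ∘ h.1.eigenvalues) *
    (star h.1.eigenvectorUnitary : Matrix (Fin d) (Fin d) ℝ)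

lemma Matrix.PosSemidef.posSemidef_sqrt {d : ℕ} {A : Matrix (Fin d) (Fin d) ℝ}
    (h : A.PosSemidef) : h.sqrt.PosSemidef := by
  unfold Matrix.PosSemidef.sqrt
  have := (posSemidef_diagonal_iff (d := ((↑) ∘ (√·) ∘ h.1.eigenvalues : Fin d → ℝ))).mpr
    (fun i => by simp [Real.sqrt_nonneg])
  exact this.mul_mul_conjTranspose_same (h.1.eigenvectorUnitary.1)

lemma Matrix.PosSemidef.sqrt_mul_self {d : ℕ} {A : Matrix (Fin d) (Fin d) ℝ}
    (h : A.PosSemidef) : h.sqrt * h.sqrt = A := by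
  unfold Matrix.PosSemidef.sqrt
  conv_rhs => rw [h.1.spectral_theorem, Unitary.conjStarAlgAut_apply]
  have hU : (star h.1.eigenvectorUnitary : Matrix (Fin d) (Fin d) ℝ) *
      h.1.eigenvectorUnitary.1 = 1 := Unitary.star_mul_self_of_mem h.1.eigenvectorUnitary.2
  have hD : diagonal ((↑) ∘ (√·) ∘ h.1.eigenvalues) *
      diagonal ((↑) ∘ (√·) ∘ h.1.eigenvalues) =
      diagonal (((↑) : ℝ → ℝ) ∘ h.1.eigenvalues) := by
    rw [diagonal_mul_diagonal]
    congr 1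
    funext i
    simp [Real.mul_self_sqrt (h.eigenvalues_nonneg i)]
  calc _ = h.1.eigenvectorUnitary.1 * (diagonal ((↑) ∘ (√·) ∘ h.1.eigenvalues) *
        ((star h.1.eigenvectorUnitary : Matrix (Fin d) (Fin d) ℝ) *
      h.1.eigenvectorUnitary.1) * diagonal ((↑) ∘ (√·) ∘ h.1.eigenvalues)) *
        (star h.1.eigenvectorUnitary : Matrix (Fin d) (Fin d) ℝ) := by
          simp only [Matrix.mul_assoc]
    _ = _ := by rw [hU, Matrix.mul_one, hD]; rfl

open scoped RealInnerProductSpace in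
/-- The real inner product on `EuclideanSpace ℝ (Fin d)` is the dot product. -/
lemma inner_euclid_dotProduct {d : ℕ} (x y : EuclideanSpace ℝ (Fin d)) :
    ⟪x, y⟫ = (WithLp.equiv 2 _ x) ⬝ᵥ (WithLp.equiv 2 _ y) := by
  simp [PiLp.inner_apply, dotProduct, RCLike.inner_apply]
  exact Finset.sum_congr rfl fun _ _ => mul_comm _ _

/-- For a unit vector `v`, `|vᵀ M v| ≤ ‖M‖_op`. -/
lemma abs_dotProduct_mulVec_le_opNorm {d : ℕ} (M : Matrix (Fin d) (Fin d) ℝ)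
    (v : EuclideanSpace ℝ (Fin d)) (hv : ‖v‖ = 1) :
    |(WithLp.equiv 2 _ v) ⬝ᵥ (M *ᵥ (WithLp.equiv 2 _ v))| ≤ opNorm M := by
  open scoped RealInnerProductSpace in
  have h1 : (WithLp.equiv 2 _ v) ⬝ᵥ (M *ᵥ (WithLp.equiv 2 _ v))
      = ⟪v, (LinearMap.toContinuousLinearMap (Matrix.toEuclideanLin M)) v⟫ := by
    rw [inner_euclid_dotProduct]
    simp [Matrix.toEuclideanLin_apply]
  rw [h1]
  calc |⟪v, (LinearMap.toContinuousLinearMap (Matrix.toEuclideanLin M)) v⟫|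
      ≤ ‖v‖ * ‖(LinearMap.toContinuousLinearMap (Matrix.toEuclideanLin M)) v‖ :=
        abs_real_inner_le_norm _ _
    _ ≤ ‖v‖ * (opNorm M * ‖v‖) := by
        gcongr
        exact ContinuousLinearMap.le_opNorm _ _
    _ = opNorm M := by rw [hv]; ring

/-- An eigenvector equation for `toEuclideanLin` of a hermitian matrix. -/
lemma toEuclideanLin_eigenvectorBasis {d : ℕ} {C : Matrix (Fin d) (Fin d) ℝ}
    (hC : C.IsHermitian) (i : Fin d) :
    Matrix.toEuclideanLin C (hC.eigenvectorBasis i)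
      = hC.eigenvalues i • hC.eigenvectorBasis i := by
  have h := hC.mulVec_eigenvectorBasis i
  ext j
  have := congrFun h j
  simpa [Matrix.toEuclideanLin_apply] using this

/-- The operator norm of a symmetric matrix is at most any uniform bound on the absolute
values of its eigenvalues. -/
lemma opNorm_le_of_eigenvalues_le {d : ℕ} {C : Matrix (Fin d) (Fin d) ℝ}
    (hC : C.IsHermitian) {r : ℝ} (hr : 0 ≤ r)
    (h : ∀ i, |hC.eigenvalues i| ≤ r) : opNorm C ≤ r := by
  open scoped RealInnerProductSpace in
  rw [opNorm]
  refine ContinuousLinearMap.opNorm_le_bound _ hr fun x => ?_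
  set e := hC.eigenvectorBasis
  set T := Matrix.toEuclideanLin C
  have hsymm : T.IsSymmetric := Matrix.isHermitian_iff_isSymmetric.1 hC
  have hrepr : ∀ i, e.repr (T x) i = hC.eigenvalues i * e.repr x i := by
    intro i
    rw [e.repr_apply_apply, e.repr_apply_apply, ← hsymm (e i) x,
      toEuclideanLin_eigenvectorBasis hC i, real_inner_smul_left]
  have hx : ‖(LinearMap.toContinuousLinearMap T) x‖ = ‖e.repr (T x)‖ := by
    simp [LinearIsometryEquiv.norm_map]
  rw [hx]
  have h2 : ‖e.repr (T x)‖ ^ 2 ≤ (r * ‖x‖) ^ 2 := by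
    have h3 : ‖e.repr (T x)‖ ^ 2 = ∑ i, (hC.eigenvalues i * e.repr x i) ^ 2 := by
      rw [EuclideanSpace.norm_eq, Real.sq_sqrt (by positivity)]
      exact Finset.sum_congr rfl fun i _ => by rw [hrepr i, Real.norm_eq_abs, sq_abs]
    have h4 : (r * ‖x‖) ^ 2 = ∑ i, r ^ 2 * (e.repr x i) ^ 2 := by
      rw [← Finset.mul_sum, mul_pow]
      congr 1
      rw [← e.repr.norm_map x, EuclideanSpace.norm_eq, Real.sq_sqrt (by positivity)]
      exact Finset.sum_congr rfl fun i _ => by rw [Real.norm_eq_abs, sq_abs]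
    rw [h3, h4]
    refine Finset.sum_le_sum fun i _ => ?_
    rw [mul_pow]
    refine mul_le_mul_of_nonneg_right ?_ (sq_nonneg _)
    rw [← sq_abs]
    exact pow_le_pow_left₀ (abs_nonneg _) (h i) 2
  have h5 := Real.sqrt_le_sqrt h2
  rwa [Real.sqrt_sq (norm_nonneg _), Real.sqrt_sq (by positivity)] at h5

/-- The Powers–Størmer estimate for each eigenvalue of `√A - √B`. -/
lemma eigenvalue_sq_le_opNorm_sub {d : ℕ} {A B : Matrix (Fin d) (Fin d) ℝ}
    (hA : A.PosSemidef) (hB : B.PosSemidef)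
    (hC : (hA.sqrt - hB.sqrt).IsHermitian) (i : Fin d) :
    hC.eigenvalues i ^ 2 ≤ opNorm (A - B) := by
  set C : Matrix (Fin d) (Fin d) ℝ := hA.sqrt - hB.sqrt with hCdef
  set μ : ℝ := hC.eigenvalues i
  set vE : EuclideanSpace ℝ (Fin d) := hC.eigenvectorBasis i
  set v : Fin d → ℝ := WithLp.equiv 2 _ vE with hvdef
  have hvnorm : ‖vE‖ = 1 := hC.eigenvectorBasis.orthonormal.1 i
  have hvv : v ⬝ᵥ v = 1 := by
    have := inner_euclid_dotProduct vE vE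
    rw [real_inner_self_eq_norm_sq, hvnorm] at this
    simpa [hvdef] using this.symm
  have hCv : C *ᵥ v = μ • v := hC.mulVec_eigenvectorBasis i
  set pA : ℝ := v ⬝ᵥ (hA.sqrt *ᵥ v)
  set pB : ℝ := v ⬝ᵥ (hB.sqrt *ᵥ v)
  have hpA : 0 ≤ pA := by simpa using hA.posSemidef_sqrt.dotProduct_mulVec_nonneg v
  have hpB : 0 ≤ pB := by simpa using hB.posSemidef_sqrt.dotProduct_mulVec_nonneg v
  have hdiff : v ⬝ᵥ (C *ᵥ v) = pA - pB := by
    rw [hCdef, sub_mulVec, dotProduct_sub]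
  have hmu : v ⬝ᵥ (C *ᵥ v) = μ := by
    rw [hCv, dotProduct_smul, smul_eq_mul, hvv, mul_one]
  have habs : |μ| ≤ pA + pB := by
    rw [← hmu, hdiff, abs_sub_le_iff]
    constructor <;> linarith
  have hAB : A - B = hA.sqrt * C + C * hB.sqrt := by
    rw [hCdef, mul_sub, sub_mul, hA.sqrt_mul_self, hB.sqrt_mul_self]
    abel
  have hCsymm : Cᵀ = C := hC
  have hkey : v ⬝ᵥ ((A - B) *ᵥ v) = μ * (pA + pB) := by
    rw [hAB, add_mulVec, dotProduct_add, ← mulVec_mulVec, hCv, mulVec_smul,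
      dotProduct_smul, ← mulVec_mulVec]
    have h2 : v ⬝ᵥ (C *ᵥ (hB.sqrt *ᵥ v)) = (C *ᵥ v) ⬝ᵥ (hB.sqrt *ᵥ v) := by
      rw [dotProduct_mulVec, ← mulVec_transpose, hCsymm]
    rw [h2, hCv, smul_dotProduct, smul_eq_mul, smul_eq_mul]
    ring
  have hbound : |μ| * (pA + pB) ≤ opNorm (A - B) := by
    have h3 := abs_dotProduct_mulVec_le_opNorm (A - B) vE hvnorm
    rw [hkey] at h3
    calc |μ| * (pA + pB) = |μ * (pA + pB)| := by
          rw [abs_mul, abs_of_nonneg (by linarith : (0:ℝ) ≤ pA + pB)]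
      _ ≤ opNorm (A - B) := h3
  calc μ ^ 2 = |μ| * |μ| := by rw [← abs_mul, abs_mul_self, sq]
    _ ≤ |μ| * (pA + pB) := mul_le_mul_of_nonneg_left habs (abs_nonneg _)
    _ ≤ opNorm (A - B) := hbound

/-- **Hölder-1/2 continuity of the matrix square root in operator norm:**
for positive semidefinite `A, B`, `‖A^{1/2} - B^{1/2}‖_op ≤ ‖A - B‖_op^{1/2}`. -/
theorem opNorm_psdSqrt_sub_psdSqrt_le
    {d : ℕ} (A B : Matrix (Fin d) (Fin d) ℝ)
    (hA : A.PosSemidef) (hB : B.PosSemidef) :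
    opNorm (psdSqrt A - psdSqrt B) ≤ Real.sqrt (opNorm (A - B)) := by
  have hAe : psdSqrt A = hA.sqrt := dif_pos hA
  have hBe : psdSqrt B = hB.sqrt := dif_pos hB
  rw [hAe, hBe]
  have hC : (hA.sqrt - hB.sqrt).IsHermitian :=
    hA.posSemidef_sqrt.1.sub hB.posSemidef_sqrt.1
  refine opNorm_le_of_eigenvalues_le hC (Real.sqrt_nonneg _) fun i => ?_
  have h := eigenvalue_sq_le_opNorm_sub hA hB hC i
  have := Real.sqrt_le_sqrt h
  rwa [Real.sqrt_sq_eq_abs] at this
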